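/- Let K ≥ 3, let ρ : ℝ → [0,∞) satisfy {ρ(u) : u ∈ ℝ} = [0,∞), and let τ : ℝ → ℝ be non-increasing on u < 0, non-decreasing on u > 0, with {τ(u) : u ≤ 0} = {τ(u) : u ≥ 0} = [τ(0), ∞). Then the image of the map u ↦ (P_sl(y; τ(ρ[u])))_{y∈[K]} from ℝ^K to ℝ^K equals Δ̂_{K-1}^∅, the set of unimodal probability vectors all of whose coordinates are nonzero. -/

import Mathlib

open scoped BigOperators

noncomputable section

/-- The probability simplex Δ_{K-1} ⊆ ℝ^K. -/
def simplex (K : ℕ) : Set (Fin K → ℝ) :=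
  {p | (∑ k, p k) = 1 ∧ ∀ k, 0 ≤ p k ∧ p k ≤ 1}

/-- A PMF (vector) is unimodal: there is a mode M such that p is
nondecreasing up to M and nonincreasing after M. -/
def Unimodal {K : ℕ} (p : Fin K → ℝ) : Prop :=
  ∃ M : Fin K, (∀ k, p k ≤ p M) ∧
    (∀ i j : Fin K, i ≤ j → j ≤ M → p i ≤ p j) ∧
    (∀ i j : Fin K, M ≤ i → i ≤ j → p j ≤ p i)

/-- Δ̂_{K-1}: the set of unimodal PMFs. -/
def uniSimplex (K : ℕ) : Set (Fin K → ℝ) :=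
  {p | p ∈ simplex K ∧ Unimodal p}

/-- The stereotype logit (SL) link function. -/
def Psl {K : ℕ} (u : Fin K → ℝ) (y : Fin K) : ℝ :=
  Real.exp (-(u y)) / ∑ k, Real.exp (-(u k))

/-- The ordering transform ρ[u]: (ρ[u])_1 = u_1, (ρ[u])_k = (ρ[u])_{k-1} + ρ(u_k). -/
def ordT (ρ : ℝ → ℝ) {K : ℕ} (u : Fin K → ℝ) : Fin K → ℝ :=
  fun k => u ⟨0, k.pos⟩ +
    ∑ j ∈ Finset.univ.filter (fun j : Fin K => 0 < (j : ℕ) ∧ (j : ℕ) ≤ (k : ℕ)), ρ (u j)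

/-- The Euclidean norm on ℝ^K. -/
def euclNorm {K : ℕ} (u : Fin K → ℝ) : ℝ :=
  Real.sqrt (∑ k, (u k) ^ 2)

/-- Euclidean distance from a point to a set. -/
def DH {K : ℕ} (u : Fin K → ℝ) (S : Set (Fin K → ℝ)) : ℝ :=
  sInf ((fun v => euclNorm (u - v)) '' S)

/- ### Auxiliary lemmas -/

lemma stmt3_tele {K : ℕ} (f w : Fin K → ℝ)
    (hf : ∀ j : Fin K, 0 < (j : ℕ) →
      f j = w j - w ⟨(j : ℕ) - 1, lt_of_le_of_lt (Nat.pred_le _) j.2⟩) :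
    ∀ m : ℕ, ∀ hm : m < K,
      ∑ j ∈ Finset.univ.filter (fun j : Fin K => 0 < (j : ℕ) ∧ (j : ℕ) ≤ m), f j
        = w ⟨m, hm⟩ - w ⟨0, Nat.lt_of_le_of_lt (Nat.zero_le m) hm⟩ := by
  intro m
  induction m with
  | zero =>
    intro hm
    rw [Finset.filter_false_of_mem, Finset.sum_empty]
    · simp
    · intro j _
      simp only [not_and]
      omega
  | succ n ih =>
    intro hm
    have hn : n < K := Nat.lt_of_succ_lt hm
    have hins : Finset.univ.filter (fun j : Fin K => 0 < (j : ℕ) ∧ (j : ℕ) ≤ n + 1)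
        = insert (⟨n + 1, hm⟩ : Fin K)
            (Finset.univ.filter (fun j : Fin K => 0 < (j : ℕ) ∧ (j : ℕ) ≤ n)) := by
      ext j
      simp only [Finset.mem_filter, Finset.mem_univ, true_and, Finset.mem_insert, Fin.ext_iff]
      omega
    rw [hins, Finset.sum_insert (by simp), hf ⟨n + 1, hm⟩ (Nat.succ_pos n), ih hn]
    simp only [Nat.add_sub_cancel]
    ring

lemma stmt3_ordT_mono {K : ℕ} (ρ : ℝ → ℝ) (hρ0 : ∀ x, 0 ≤ ρ x) (u : Fin K → ℝ)
    {i j : Fin K} (hij : i ≤ j) : ordT ρ u i ≤ ordT ρ u j := by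
  unfold ordT
  apply add_le_add_right
  apply Finset.sum_le_sum_of_subset_of_nonneg
  · intro x hx
    simp only [Finset.mem_filter, Finset.mem_univ, true_and] at hx ⊢
    exact ⟨hx.1, le_trans hx.2 (Fin.le_def.mp hij)⟩
  · exact fun k _ _ => hρ0 _

lemma stmt3_ordT_eq {K : ℕ} (ρ : ℝ → ℝ) (u w : Fin K → ℝ)
    (h0 : ∀ h : 0 < K, u ⟨0, h⟩ = w ⟨0, h⟩)
    (hf : ∀ j : Fin K, 0 < (j : ℕ) →
      ρ (u j) = w j - w ⟨(j : ℕ) - 1, lt_of_le_of_lt (Nat.pred_le _) j.2⟩) :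
    ∀ k, ordT ρ u k = w k := by
  intro k
  unfold ordT
  rw [stmt3_tele (fun j => ρ (u j)) w hf (k : ℕ) k.2, h0 k.pos]
  have e1 : (⟨(k : ℕ), k.2⟩ : Fin K) = k := rfl
  rw [e1]
  ring

lemma stmt3_forward {K : ℕ} (hK0 : 0 < K) (v : Fin K → ℝ)
    (M : Fin K) (hM : ∀ k, v M ≤ v k)
    (hv1 : ∀ i j : Fin K, i ≤ j → j ≤ M → v j ≤ v i)
    (hv2 : ∀ i j : Fin K, M ≤ i → i ≤ j → v i ≤ v j) :
    Psl v ∈ uniSimplex K ∧ ∀ k, Psl v k ≠ 0 := by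
  haveI : Nonempty (Fin K) := ⟨⟨0, hK0⟩⟩
  have hZ : 0 < ∑ k, Real.exp (-(v k)) :=
    Finset.sum_pos (fun k _ => Real.exp_pos _) Finset.univ_nonempty
  have hpos : ∀ y, 0 < Psl v y := fun y => div_pos (Real.exp_pos _) hZ
  have hle : ∀ y, Psl v y ≤ 1 := by
    intro y
    rw [Psl, div_le_one hZ]
    exact Finset.single_le_sum (fun k _ => (Real.exp_pos (-(v k))).le) (Finset.mem_univ y)
  have hsum : ∑ y, Psl v y = 1 := by
    simp only [Psl]
    rw [← Finset.sum_div, div_self hZ.ne']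
  have hmono : ∀ a b : Fin K, v a ≤ v b → Psl v b ≤ Psl v a := by
    intro a b h
    rw [Psl, Psl]
    gcongr
  exact ⟨⟨⟨hsum, fun k => ⟨(hpos k).le, hle k⟩⟩, M, fun k => hmono M k (hM k),
    fun i j hij hjM => hmono j i (hv1 i j hij hjM),
    fun i j hMi hij => hmono i j (hv2 i j hMi hij)⟩, fun k => (hpos k).ne'⟩

lemma stmt3_psl_log {K : ℕ} (p : Fin K → ℝ) (hp : ∀ k, 0 < p k)
    (hsum : ∑ k, p k = 1) (c : ℝ) :
    Psl (fun k => c - Real.log (p k)) = p := by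
  funext y
  have he : ∀ k : Fin K, Real.exp (-(c - Real.log (p k))) = p k / Real.exp c := by
    intro k
    rw [neg_sub, Real.exp_sub, Real.exp_log (hp k)]
  simp only [Psl, he]
  rw [← Finset.sum_div, hsum]
  have hc : Real.exp c ≠ 0 := (Real.exp_pos c).ne'
  field_simp

/-- the image of the VSL link map u ↦ (P_sl(y; τ(ρ[u])))_y
equals Δ̂_{K-1}^∅, the set of unimodal probability vectors with all
coordinates nonzero. -/
theorem stmt3 (K : ℕ) (hK : 3 ≤ K)
    (ρ : ℝ → ℝ) (hρ : Set.range ρ = Set.Ici (0 : ℝ))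
    (τ : ℝ → ℝ)
    (hτ1 : AntitoneOn τ (Set.Iio 0)) (hτ2 : MonotoneOn τ (Set.Ioi 0))
    (hτ3 : τ '' Set.Iic 0 = Set.Ici (τ 0))
    (hτ4 : τ '' Set.Ici 0 = Set.Ici (τ 0)) :
    Set.range (fun u : Fin K → ℝ => fun y : Fin K => Psl (fun k => τ (ordT ρ u k)) y)
      = {p : Fin K → ℝ | p ∈ uniSimplex K ∧ ∀ k, p k ≠ 0} := by
  have hK0 : 0 < K := by omega
  haveI : Nonempty (Fin K) := ⟨⟨0, hK0⟩⟩
  have hρ0 : ∀ x, 0 ≤ ρ x := by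
    intro x
    have hx : ρ x ∈ Set.range ρ := ⟨x, rfl⟩
    rw [hρ] at hx
    exact hx
  have hτmin : ∀ x, τ 0 ≤ τ x := by
    intro x
    rcases le_total x 0 with h | h
    · have hx : τ x ∈ τ '' Set.Iic 0 := ⟨x, h, rfl⟩
      rw [hτ3] at hx; exact hx
    · have hx : τ x ∈ τ '' Set.Ici 0 := ⟨x, h, rfl⟩
      rw [hτ4] at hx; exact hx
  have hτA : ∀ x y : ℝ, x ≤ y → y ≤ 0 → τ y ≤ τ x := by
    intro x y hxy hy
    rcases lt_or_eq_of_le hy with h | h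
    · exact hτ1 (lt_of_le_of_lt hxy h) h hxy
    · rw [h]; exact hτmin x
  have hτM : ∀ x y : ℝ, 0 ≤ x → x ≤ y → τ x ≤ τ y := by
    intro x y hx hxy
    rcases eq_or_lt_of_le hx with h | h
    · rw [← h]; exact hτmin y
    · exact hτ2 h (lt_of_lt_of_le h hxy) hxy
  ext p
  simp only [Set.mem_range, Set.mem_setOf_eq]
  constructor
  · rintro ⟨u, rfl⟩
    have hw : ∀ i j : Fin K, i ≤ j → ordT ρ u i ≤ ordT ρ u j :=
      fun i j hij => stmt3_ordT_mono ρ hρ0 u hij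
    obtain ⟨M, -, hM⟩ := Finset.exists_min_image Finset.univ
      (fun k => τ (ordT ρ u k)) Finset.univ_nonempty
    have hM' : ∀ k, τ (ordT ρ u M) ≤ τ (ordT ρ u k) := fun k => hM k (Finset.mem_univ k)
    have hv1 : ∀ i j : Fin K, i ≤ j → j ≤ M → τ (ordT ρ u j) ≤ τ (ordT ρ u i) := by
      intro i j hij hjM
      rcases le_or_gt (ordT ρ u j) 0 with h | h
      · exact hτA _ _ (hw i j hij) h
      · have h1 : τ (ordT ρ u j) ≤ τ (ordT ρ u M) := hτM _ _ h.le (hw j M hjM)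
        have h2 : τ (ordT ρ u M) ≤ τ (ordT ρ u i) := hM' i
        linarith
    have hv2 : ∀ i j : Fin K, M ≤ i → i ≤ j → τ (ordT ρ u i) ≤ τ (ordT ρ u j) := by
      intro i j hMi hij
      rcases le_or_gt 0 (ordT ρ u i) with h | h
      · exact hτM _ _ h (hw i j hij)
      · have h1 : τ (ordT ρ u i) ≤ τ (ordT ρ u M) := hτA _ _ (hw M i hMi) h.le
        have h2 : τ (ordT ρ u M) ≤ τ (ordT ρ u j) := hM' j
        linarith
    exact stmt3_forward hK0 (fun k => τ (ordT ρ u k)) M hM' hv1 hv2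
  · rintro ⟨⟨⟨hsum, hbd⟩, M, hM1, hM2, hM3⟩, hnz⟩
    have hppos : ∀ k, 0 < p k := fun k => lt_of_le_of_ne (hbd k).1 (Ne.symm (hnz k))
    -- the target valley-shaped vector
    set t : Fin K → ℝ := fun k => τ 0 - Real.log (p k) with htdef
    have htge : ∀ k, τ 0 ≤ t k := by
      intro k
      have : Real.log (p k) ≤ 0 := Real.log_nonpos (hbd k).1 (hbd k).2
      simp only [htdef]
      linarith
    have ht1 : ∀ i j : Fin K, i ≤ j → j ≤ M → t j ≤ t i := by
      intro i j hij hjM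
      have := Real.log_le_log (hppos i) (hM2 i j hij hjM)
      simp only [htdef]
      linarith
    have ht2 : ∀ i j : Fin K, M ≤ i → i ≤ j → t i ≤ t j := by
      intro i j hMi hij
      have := Real.log_le_log (hppos j) (hM3 i j hMi hij)
      simp only [htdef]
      linarith
    -- choice functions
    have hgex : ∀ s : ℝ, ∃ x : ℝ, τ 0 ≤ s → (x ≤ 0 ∧ τ x = s) := by
      intro s
      by_cases hs : τ 0 ≤ s
      · have : s ∈ τ '' Set.Iic 0 := by rw [hτ3]; exact hs
        obtain ⟨x, hx, hxs⟩ := this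
        exact ⟨x, fun _ => ⟨hx, hxs⟩⟩
      · exact ⟨0, fun h => absurd h hs⟩
    choose g hg using hgex
    have hhex : ∀ s : ℝ, ∃ x : ℝ, τ 0 ≤ s → (0 ≤ x ∧ τ x = s) := by
      intro s
      by_cases hs : τ 0 ≤ s
      · have : s ∈ τ '' Set.Ici 0 := by rw [hτ4]; exact hs
        obtain ⟨x, hx, hxs⟩ := this
        exact ⟨x, fun _ => ⟨hx, hxs⟩⟩
      · exact ⟨0, fun h => absurd h hs⟩
    choose f hf using hhex
    have hgA : ∀ s1 s2 : ℝ, τ 0 ≤ s2 → s2 ≤ s1 → g s1 ≤ g s2 := by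
      intro s1 s2 h2 h21
      have h1 : τ 0 ≤ s1 := le_trans h2 h21
      rcases eq_or_lt_of_le h21 with he | hlt
      · rw [he]
      · by_contra hcon
        push_neg at hcon
        have hle1 : g s1 ≤ 0 := (hg s1 h1).1
        rcases eq_or_lt_of_le hle1 with h0 | h0
        · have h00 := (hg s1 h1).2
          rw [h0] at h00
          linarith [hτmin 0]
        · have hh := hτ1 (show g s2 ∈ Set.Iio 0 from lt_trans hcon h0) h0 hcon.le
          rw [(hg s1 h1).2, (hg s2 h2).2] at hh
          linarith
    have hfM : ∀ s1 s2 : ℝ, τ 0 ≤ s1 → s1 ≤ s2 → f s1 ≤ f s2 := by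
      intro s1 s2 h1 h12
      have h2 : τ 0 ≤ s2 := le_trans h1 h12
      rcases eq_or_lt_of_le h12 with he | hlt
      · rw [he]
      · by_contra hcon
        push_neg at hcon
        have hle2 : 0 ≤ f s2 := (hf s2 h2).1
        rcases eq_or_lt_of_le hle2 with h0 | h0
        · have h00 := (hf s2 h2).2
          rw [← h0] at h00
          linarith
        · have hh := hτ2 h0 (lt_trans h0 hcon) hcon.le
          rw [(hf s1 h1).2, (hf s2 h2).2] at hh
          linarith
    -- the nondecreasing preimage sequence
    set w : Fin K → ℝ := fun k => if (k : ℕ) ≤ (M : ℕ) then g (t k) else f (t k) with hwdef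
    have hwτ : ∀ k, τ (w k) = t k := by
      intro k
      simp only [hwdef]
      by_cases hk : (k : ℕ) ≤ (M : ℕ)
      · rw [if_pos hk]; exact (hg _ (htge k)).2
      · rw [if_neg hk]; exact (hf _ (htge k)).2
    have hwmono : ∀ i j : Fin K, i ≤ j → w i ≤ w j := by
      intro i j hij
      have hijv : (i : ℕ) ≤ (j : ℕ) := Fin.le_def.mp hij
      simp only [hwdef]
      by_cases hiM : (i : ℕ) ≤ (M : ℕ)
      · by_cases hjM : (j : ℕ) ≤ (M : ℕ)
        · rw [if_pos hiM, if_pos hjM]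
          exact hgA (t i) (t j) (htge j) (ht1 i j hij (Fin.le_def.mpr hjM))
        · rw [if_pos hiM, if_neg hjM]
          exact le_trans (hg _ (htge i)).1 (hf _ (htge j)).1
      · have hjM : ¬ (j : ℕ) ≤ (M : ℕ) := by omega
        rw [if_neg hiM, if_neg hjM]
        exact hfM (t i) (t j) (htge i) (ht2 i j (Fin.le_def.mpr (by omega)) hij)
    -- build u
    have hrex : ∀ x : ℝ, ∃ a : ℝ, 0 ≤ x → ρ a = x := by
      intro x
      by_cases hx : (0:ℝ) ≤ x
      · have : x ∈ Set.range ρ := by rw [hρ]; exact hx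
        obtain ⟨a, ha⟩ := this
        exact ⟨a, fun _ => ha⟩
      · exact ⟨0, fun h => absurd h hx⟩
    choose r hr using hrex
    refine ⟨fun k => if hk : (k : ℕ) = 0 then w k
      else r (w k - w ⟨(k : ℕ) - 1, lt_of_le_of_lt (Nat.pred_le _) k.2⟩), ?_⟩
    set u : Fin K → ℝ := fun k => if hk : (k : ℕ) = 0 then w k
      else r (w k - w ⟨(k : ℕ) - 1, lt_of_le_of_lt (Nat.pred_le _) k.2⟩) with hudef
    have hord : ∀ k, ordT ρ u k = w k := by
      apply stmt3_ordT_eq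
      · intro h
        simp only [hudef]
        simp
      · intro j hj
        simp only [hudef]
        rw [dif_neg (by omega)]
        apply hr
        have : (⟨(j : ℕ) - 1, lt_of_le_of_lt (Nat.pred_le _) j.2⟩ : Fin K) ≤ j :=
          Fin.le_def.mpr (by simp)
        have := hwmono _ _ this
        linarith
    have hcomp : (fun k => τ (ordT ρ u k)) = t := by
      funext k
      rw [hord k, hwτ k]
    have : (fun y : Fin K => Psl (fun k => τ (ordT ρ u k)) y) = Psl t := by
      rw [hcomp]
    rw [this, htdef]
    exact stmt3_psl_log p hppos hsum (τ 0)
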